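/- If G is a graph in which the neighborhood of every vertex induces a graph isomorphic to 2K_2 (two disjoint edges), then G is claw-induced-saturated. -/

import Mathlib

open SimpleGraph

/-- `G` contains an induced copy of `H`. -/
def HasInducedCopy {W V : Type*} (H : SimpleGraph W) (G : SimpleGraph V) : Prop :=
  Nonempty (H ↪g G)

/-- `G` is `H`-induced-saturated: `G` has no induced copy of `H`, but deleting any edge
or adding any non-edge creates an induced copy of `H`. -/
def IsIndSat {V W : Type*} (G : SimpleGraph V) (H : SimpleGraph W) : Prop :=
  ¬ HasInducedCopy H G ∧
  (∀ u v : V, G.Adj u v → HasInducedCopy H (G.deleteEdges {s(u, v)})) ∧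
  (∀ u v : V, u ≠ v → ¬ G.Adj u v →
    HasInducedCopy H (G ⊔ SimpleGraph.fromEdgeSet {s(u, v)}))

/-- The claw `K_{1,3}`: star with center `0` and leaves `1, 2, 3`. -/
def claw : SimpleGraph (Fin 4) :=
  SimpleGraph.fromRel (fun i _ => i = 0)

/-- `2K₂`: two disjoint edges. -/
def twoK2 : SimpleGraph (Fin 2 × Fin 2) :=
  SimpleGraph.fromRel (fun x y => x.1 = y.1)

lemma twoK2_adj {x y : Fin 2 × Fin 2} : twoK2.Adj x y ↔ x ≠ y ∧ x.1 = y.1 := by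
  simp only [twoK2, fromRel_adj]
  constructor
  · rintro ⟨hne, h | h⟩ <;> exact ⟨hne, by omega⟩
  · rintro ⟨hne, h⟩; exact ⟨hne, Or.inl h⟩

lemma claw_adj {i j : Fin 4} : claw.Adj i j ↔ i ≠ j ∧ (i = 0 ∨ j = 0) := by
  simp [claw, fromRel_adj]

lemma claw_embed {V : Type*} (G' : SimpleGraph V) (c a b d : V)
    (hab : a ≠ b) (had : a ≠ d) (hbd : b ≠ d)
    (h1 : G'.Adj c a) (h2 : G'.Adj c b) (h3 : G'.Adj c d)
    (n1 : ¬ G'.Adj a b) (n2 : ¬ G'.Adj a d) (n3 : ¬ G'.Adj b d) :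
    HasInducedCopy claw G' := by
  have hca := h1.ne
  have hcb := h2.ne
  have hcd := h3.ne
  have n1' : ¬ G'.Adj b a := fun hh => n1 hh.symm
  have n2' : ¬ G'.Adj d a := fun hh => n2 hh.symm
  have n3' : ¬ G'.Adj d b := fun hh => n3 hh.symm
  refine ⟨⟨⟨![c, a, b, d], ?_⟩, ?_⟩⟩
  · intro i j hij
    fin_cases i <;> fin_cases j <;> simp_all
  · intro i j
    show G'.Adj (![c, a, b, d] i) (![c, a, b, d] j) ↔ claw.Adj i j
    fin_cases i <;> fin_cases j <;>
      simp_all [claw_adj, h1.symm, h2.symm, h3.symm, G'.irrefl]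

section Aux
variable {V : Type*} {G : SimpleGraph V}
  (h : ∀ v : V, Nonempty ((G.induce (G.neighborSet v)) ≃g twoK2))

private lemma adj_transfer {v : V} (e : (G.induce (G.neighborSet v)) ≃g twoK2)
    (x y : G.neighborSet v) : twoK2.Adj (e x) (e y) ↔ G.Adj x y := by
  rw [e.map_adj_iff]
  simp [comap_adj]

include h in
lemma no3indep {v a b c : V} (ha : G.Adj v a) (hb : G.Adj v b) (hc : G.Adj v c)
    (hab : a ≠ b) (hac : a ≠ c) (hbc : b ≠ c)
    (nab : ¬ G.Adj a b) (nac : ¬ G.Adj a c) (nbc : ¬ G.Adj b c) : False := by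
  obtain ⟨e⟩ := h v
  set A := e ⟨a, ha⟩ with hA
  set B := e ⟨b, hb⟩ with hB
  set C := e ⟨c, hc⟩ with hC
  have hAB : A ≠ B := fun hh => hab (by simpa using congrArg Subtype.val (e.injective hh))
  have hAC : A ≠ C := fun hh => hac (by simpa using congrArg Subtype.val (e.injective hh))
  have hBC : B ≠ C := fun hh => hbc (by simpa using congrArg Subtype.val (e.injective hh))
  have nAB : ¬ twoK2.Adj A B := fun hh => nab ((adj_transfer e _ _).1 hh)
  have nAC : ¬ twoK2.Adj A C := fun hh => nac ((adj_transfer e _ _).1 hh)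
  have nBC : ¬ twoK2.Adj B C := fun hh => nbc ((adj_transfer e _ _).1 hh)
  rw [twoK2_adj] at nAB nAC nBC
  push_neg at nAB nAC nBC
  have f1 := nAB hAB
  have f2 := nAC hAC
  have f3 := nBC hBC
  omega

include h in
lemma deg_le_one {v b x y : V} (hb : G.Adj v b) (hx : G.Adj v x) (hy : G.Adj v y)
    (hxy : x ≠ y) (hbx : G.Adj b x) (hby : G.Adj b y) : False := by
  obtain ⟨e⟩ := h v
  set B := e ⟨b, hb⟩ with hB
  set X := e ⟨x, hx⟩ with hX
  set Y := e ⟨y, hy⟩ with hY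
  have aBX : twoK2.Adj B X := (adj_transfer e _ _).2 hbx
  have aBY : twoK2.Adj B Y := (adj_transfer e _ _).2 hby
  rw [twoK2_adj] at aBX aBY
  have hXY : X ≠ Y := fun hh => hxy (by simpa using congrArg Subtype.val (e.injective hh))
  apply hXY
  have h1 : X.2 ≠ B.2 := by
    intro hh; exact aBX.1 (Prod.ext aBX.2.symm hh).symm
  have h2 : Y.2 ≠ B.2 := by
    intro hh; exact aBY.1 (Prod.ext aBY.2.symm hh).symm
  have : X.2 = Y.2 := by omega
  exact Prod.ext (aBX.2.symm.trans aBY.2) this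

include h in
lemma partner {v a : V} (ha : G.Adj v a) : ∃ b, G.Adj v b ∧ G.Adj a b := by
  obtain ⟨e⟩ := h v
  set A := e ⟨a, ha⟩ with hA
  set B : Fin 2 × Fin 2 := (A.1, A.2 + 1) with hB
  have hadj : twoK2.Adj A B := by
    rw [twoK2_adj]
    refine ⟨fun hh => ?_, rfl⟩
    have := congrArg Prod.snd hh
    simp only [hB] at this
    omega
  refine ⟨(e.symm B).val, (e.symm B).prop, ?_⟩
  have : twoK2.Adj A (e (e.symm B)) := by rwa [e.apply_symm_apply]
  exact (adj_transfer e _ _).1 this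

include h in
lemma otherEdge {a u v : V} (hu : G.Adj a u) (hv : G.Adj a v) (huv : G.Adj u v) :
    ∃ x, G.Adj a x ∧ ¬ G.Adj x u ∧ ¬ G.Adj x v ∧ x ≠ u ∧ x ≠ v := by
  obtain ⟨e⟩ := h a
  set U := e ⟨u, hu⟩ with hU
  set Vv := e ⟨v, hv⟩ with hV
  have aUV : twoK2.Adj U Vv := (adj_transfer e _ _).2 huv
  rw [twoK2_adj] at aUV
  set X : Fin 2 × Fin 2 := (U.1 + 1, 0) with hX
  have hX1 : X.1 ≠ U.1 := by simp only [hX]; omega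
  have hX2 : X.1 ≠ Vv.1 := by rw [← aUV.2]; exact hX1
  refine ⟨(e.symm X).val, (e.symm X).prop, ?_, ?_, ?_, ?_⟩
  · intro hh
    have : twoK2.Adj (e (e.symm X)) U := (adj_transfer e _ _).2 hh
    rw [e.apply_symm_apply, twoK2_adj] at this
    exact hX1 this.2
  · intro hh
    have : twoK2.Adj (e (e.symm X)) Vv := (adj_transfer e _ _).2 hh
    rw [e.apply_symm_apply, twoK2_adj] at this
    exact hX2 this.2
  · intro hh
    apply hX1
    have : e.symm X = ⟨u, hu⟩ := Subtype.ext hh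
    have := congrArg e this
    rw [e.apply_symm_apply] at this
    rw [this]
  · intro hh
    apply hX2
    have : e.symm X = ⟨v, hv⟩ := Subtype.ext hh
    have := congrArg e this
    rw [e.apply_symm_apply] at this
    rw [this]

include h in
lemma allFour (u : V) : ∃ a b c d : V,
    G.Adj u a ∧ G.Adj u b ∧ G.Adj u c ∧ G.Adj u d ∧
    G.Adj a b ∧ G.Adj c d ∧
    ¬ G.Adj a c ∧ ¬ G.Adj a d ∧ ¬ G.Adj b c ∧ ¬ G.Adj b d ∧
    a ≠ c ∧ a ≠ d ∧ b ≠ c ∧ b ≠ d := by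
  obtain ⟨e⟩ := h u
  have key : ∀ X Y : Fin 2 × Fin 2, twoK2.Adj X Y → G.Adj (e.symm X).val (e.symm Y).val := by
    intro X Y hXY
    have : twoK2.Adj (e (e.symm X)) (e (e.symm Y)) := by
      rwa [e.apply_symm_apply, e.apply_symm_apply]
    exact (adj_transfer e _ _).1 this
  have key2 : ∀ X Y : Fin 2 × Fin 2, ¬ twoK2.Adj X Y → ¬ G.Adj (e.symm X).val (e.symm Y).val := by
    intro X Y hXY hh
    apply hXY
    have : twoK2.Adj (e (e.symm X)) (e (e.symm Y)) := (adj_transfer e _ _).2 hh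
    rwa [e.apply_symm_apply, e.apply_symm_apply] at this
  have keyne : ∀ X Y : Fin 2 × Fin 2, X ≠ Y → (e.symm X).val ≠ (e.symm Y).val := by
    intro X Y hXY hh
    exact hXY (by simpa using congrArg e (Subtype.ext hh : e.symm X = e.symm Y))
  refine ⟨(e.symm (0,0)).val, (e.symm (0,1)).val, (e.symm (1,0)).val, (e.symm (1,1)).val,
    (e.symm _).prop, (e.symm _).prop, (e.symm _).prop, (e.symm _).prop,
    key _ _ (by rw [twoK2_adj]; exact ⟨by decide, rfl⟩),
    key _ _ (by rw [twoK2_adj]; exact ⟨by decide, rfl⟩),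
    key2 _ _ (by rw [twoK2_adj]; push_neg; intro _; decide),
    key2 _ _ (by rw [twoK2_adj]; push_neg; intro _; decide),
    key2 _ _ (by rw [twoK2_adj]; push_neg; intro _; decide),
    key2 _ _ (by rw [twoK2_adj]; push_neg; intro _; decide),
    keyne _ _ (by decide), keyne _ _ (by decide), keyne _ _ (by decide), keyne _ _ (by decide)⟩

end Aux

/-- If the neighborhood of every vertex of `G` induces a graph isomorphic to
`2K₂`, then `G` is claw-induced-saturated. -/
theorem neighborhood_twoK2_claw_indSat {V : Type*} (G : SimpleGraph V)
    (h : ∀ v : V, Nonempty ((G.induce (G.neighborSet v)) ≃g twoK2)) :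
    IsIndSat G claw := by
  refine ⟨?_, ?_, ?_⟩
  · -- no induced claw
    rintro ⟨f⟩
    have adj01 : G.Adj (f 0) (f 1) := f.map_rel_iff.2 (by rw [claw_adj]; decide)
    have adj02 : G.Adj (f 0) (f 2) := f.map_rel_iff.2 (by rw [claw_adj]; decide)
    have adj03 : G.Adj (f 0) (f 3) := f.map_rel_iff.2 (by rw [claw_adj]; decide)
    have n12 : ¬ G.Adj (f 1) (f 2) := fun hh => by
      have := f.map_rel_iff.1 hh; rw [claw_adj] at this; revert this; decide
    have n13 : ¬ G.Adj (f 1) (f 3) := fun hh => by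
      have := f.map_rel_iff.1 hh; rw [claw_adj] at this; revert this; decide
    have n23 : ¬ G.Adj (f 2) (f 3) := fun hh => by
      have := f.map_rel_iff.1 hh; rw [claw_adj] at this; revert this; decide
    exact no3indep h adj01 adj02 adj03
      (fun hh => by have := f.injective hh; simp at this)
      (fun hh => by have := f.injective hh; simp at this)
      (fun hh => by have := f.injective hh; simp at this) n12 n13 n23
  · -- delete an edge
    intro u v huv
    obtain ⟨a, hua, hva⟩ := partner h huv
    obtain ⟨x, hax, hxu, hxv, hxu', hxv'⟩ := otherEdge h hua.symm hva.symm huv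
    set G' := G.deleteEdges {s(u, v)} with hG'
    have hadj : ∀ p q : V, p ∉ ({u, v} : Set V) → G.Adj p q → G'.Adj p q := by
      intro p q hp hpq
      rw [hG', deleteEdges_adj]
      refine ⟨hpq, ?_⟩
      simp only [Set.mem_singleton_iff, Sym2.eq_iff]
      push_neg
      simp only [Set.mem_insert_iff, Set.mem_singleton_iff] at hp
      push_neg at hp
      constructor
      · intro hh; exact absurd hh hp.1
      · intro hh; exact absurd hh hp.2
    have haset : a ∉ ({u, v} : Set V) := by
      simp only [Set.mem_insert_iff, Set.mem_singleton_iff]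
      push_neg
      exact ⟨hua.ne', hva.ne'⟩
    have h1 : G'.Adj a u := hadj a u haset hua.symm
    have h2 : G'.Adj a v := hadj a v haset hva.symm
    have h3 : G'.Adj a x := hadj a x haset hax
    have nuv : ¬ G'.Adj u v := by
      rw [hG', deleteEdges_adj]
      rintro ⟨-, hh⟩
      exact hh rfl
    have nux : ¬ G'.Adj u x := fun hh => hxu (by
      rw [hG', deleteEdges_adj] at hh; exact hh.1.symm)
    have nvx : ¬ G'.Adj v x := fun hh => hxv (by
      rw [hG', deleteEdges_adj] at hh; exact hh.1.symm)
    exact claw_embed G' a u v x huv.ne (Ne.symm hxu') (Ne.symm hxv') h1 h2 h3 nuv nux nvx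
  · -- add a non-edge
    intro u v hne hnadj
    obtain ⟨a, b, c, d, hua, hub, huc, hud, hab, hcd, nac, nad, nbc, nbd,
      neac, nead, nebc, nebd⟩ := allFour h u
    -- find x ∈ {a, b} not adjacent to v
    have hx : ∃ x, G.Adj u x ∧ ¬ G.Adj v x ∧ ¬ G.Adj x c ∧ ¬ G.Adj x d ∧
        x ≠ c ∧ x ≠ d := by
      by_cases hva : G.Adj v a
      · refine ⟨b, hub, ?_, nbc, nbd, nebc, nebd⟩
        intro hvb
        exact deg_le_one h hab hua.symm hva.symm hne hub.symm hvb.symm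
      · exact ⟨a, hua, hva, nac, nad, neac, nead⟩
    obtain ⟨x, hux, hvx, hxc, hxd, hxc', hxd'⟩ := hx
    have hy : ∃ y, G.Adj u y ∧ ¬ G.Adj v y ∧ ¬ G.Adj x y ∧ x ≠ y := by
      by_cases hvc : G.Adj v c
      · refine ⟨d, hud, ?_, hxd, hxd'⟩
        intro hvd
        exact deg_le_one h hcd huc.symm hvc.symm hne hud.symm hvd.symm
      · exact ⟨c, huc, hvc, hxc, hxc'⟩
    obtain ⟨y, huy, hvy, hxy, hxy'⟩ := hy
    set G' := G ⊔ SimpleGraph.fromEdgeSet {s(u, v)} with hG'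
    have hxu : x ≠ u := hux.ne'
    have hyu : y ≠ u := huy.ne'
    have hxv : x ≠ v := fun hh => hnadj (hh ▸ hux)
    have hyv : y ≠ v := fun hh => hnadj (hh ▸ huy)
    have h1 : G'.Adj u v := by
      rw [hG', sup_adj, fromEdgeSet_adj]
      exact Or.inr ⟨rfl, hne⟩
    have h2 : G'.Adj u x := by rw [hG', sup_adj]; exact Or.inl hux
    have h3 : G'.Adj u y := by rw [hG', sup_adj]; exact Or.inl huy
    have nonadj : ∀ p q : V, p ≠ u → q ≠ u → ¬ G.Adj p q → ¬ G'.Adj p q := by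
      intro p q hp hq hpq hh
      rw [hG', sup_adj, fromEdgeSet_adj] at hh
      rcases hh with hh | ⟨hh, -⟩
      · exact hpq hh
      · rw [Set.mem_singleton_iff, Sym2.eq_iff] at hh
        rcases hh with ⟨hh, -⟩ | ⟨-, hh⟩
        · exact hp hh
        · exact hq hh
    have n1 : ¬ G'.Adj v x := nonadj v x (Ne.symm hne) hxu hvx
    have n2 : ¬ G'.Adj v y := nonadj v y (Ne.symm hne) hyu hvy
    have n3 : ¬ G'.Adj x y := nonadj x y hxu hyu hxy
    exact claw_embed G' u v x y (Ne.symm hxv) (Ne.symm hyv) hxy' h1 h2 h3 n1 n2 n3
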